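/- Let n be a positive natural number and let (E_α)_{α ∈ A} be a finite family of n×n positive semidefinite complex matrices with Σ_α E_α = I (a POVM), and define the bare measurement channel Φ(ρ) = Σ_α √E_α ρ √E_α. Then for every n×n complex matrix ρ, ‖Φ(ρ)‖_F = ‖ρ‖_F if and only if Φ(ρ) = ρ. -/

import Mathlib

open Matrix
open scoped ComplexOrder

/-- The Frobenius (Hilbert–Schmidt) norm `‖A‖_F = √(Tr(A†A))`. -/
noncomputable def frobNorm {n : ℕ} (A : Matrix (Fin n) (Fin n) ℂ) : ℝ :=
  Real.sqrt ((Aᴴ * A).trace).re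

/-- The positive semidefinite square root of a positive semidefinite matrix (as in the older
Mathlib, where it was `Matrix.PosSemidef.sqrt`). -/
noncomputable def Matrix.PosSemidef.sqrt {m : Type*} [Fintype m] [DecidableEq m] {𝕜 : Type*}
    [RCLike 𝕜] {A : Matrix m m 𝕜} (hA : A.PosSemidef) : Matrix m m 𝕜 :=
  hA.1.eigenvectorUnitary.1 * diagonal ((↑) ∘ (√·) ∘ hA.1.eigenvalues) *
  (star hA.1.eigenvectorUnitary : Matrix m m 𝕜)

lemma Matrix.PosSemidef.posSemidef_sqrt {m : Type*} [Fintype m] [DecidableEq m] {𝕜 : Type*}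
    [RCLike 𝕜] {A : Matrix m m 𝕜} (hA : A.PosSemidef) : hA.sqrt.PosSemidef := by
  unfold Matrix.PosSemidef.sqrt
  have hD : (diagonal ((↑) ∘ (√·) ∘ hA.1.eigenvalues) : Matrix m m 𝕜).PosSemidef := by
    rw [posSemidef_diagonal_iff]
    intro i
    simp only [Function.comp_apply]
    exact RCLike.ofReal_nonneg.mpr (Real.sqrt_nonneg _)
  have := hD.mul_mul_conjTranspose_same (hA.1.eigenvectorUnitary : Matrix m m 𝕜)
  rwa [← star_eq_conjTranspose] at this

lemma Matrix.PosSemidef.sqrt_mul_self {m : Type*} [Fintype m] [DecidableEq m] {𝕜 : Type*}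
    [RCLike 𝕜] {A : Matrix m m 𝕜} (hA : A.PosSemidef) : hA.sqrt * hA.sqrt = A := by
  unfold Matrix.PosSemidef.sqrt
  set U : Matrix m m 𝕜 := hA.1.eigenvectorUnitary.1
  set D : Matrix m m 𝕜 := diagonal ((↑) ∘ (√·) ∘ hA.1.eigenvalues)
  have hU : (star hA.1.eigenvectorUnitary : Matrix m m 𝕜) * U = 1 :=
    Unitary.coe_star_mul_self _
  have hDD : D * D = diagonal (RCLike.ofReal ∘ hA.1.eigenvalues) := by
    simp only [D, diagonal_mul_diagonal]
    congr 1
    funext i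
    simp only [Function.comp_apply]
    rw [← RCLike.ofReal_mul, Real.mul_self_sqrt (hA.eigenvalues_nonneg i)]
  calc U * D * (star hA.1.eigenvectorUnitary : Matrix m m 𝕜) *
        (U * D * (star hA.1.eigenvectorUnitary : Matrix m m 𝕜))
      = U * (D * ((star hA.1.eigenvectorUnitary : Matrix m m 𝕜) * U) * D) *
        (star hA.1.eigenvectorUnitary : Matrix m m 𝕜) := by simp only [mul_assoc]
    _ = U * (D * D) * (star hA.1.eigenvectorUnitary : Matrix m m 𝕜) := by rw [hU, mul_one]
    _ = A := by
      rw [hDD]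
      conv_rhs => rw [hA.1.spectral_theorem, Unitary.conjStarAlgAut_apply]

lemma psd_entry_nonneg {n : ℕ} {A : Matrix (Fin n) (Fin n) ℂ} (hA : A.PosSemidef) (i : Fin n) :
    0 ≤ A i i := by
  exact hA.diag_nonneg

lemma psd_trace_nonneg {n : ℕ} {A : Matrix (Fin n) (Fin n) ℂ} (hA : A.PosSemidef) :
    0 ≤ A.trace :=
  Finset.sum_nonneg fun i _ => psd_entry_nonneg hA i

lemma psd_mul_trace_nonneg {n : ℕ} {A B : Matrix (Fin n) (Fin n) ℂ}
    (hA : A.PosSemidef) (hB : B.PosSemidef) : 0 ≤ (A * B).trace := by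
  have h1 : (A * B).trace = (hA.sqrt * B * hA.sqrtᴴ).trace := by
    conv_lhs => rw [← hA.sqrt_mul_self]
    rw [hA.posSemidef_sqrt.1, mul_assoc, trace_mul_comm, mul_assoc]
  rw [h1]
  exact psd_trace_nonneg (hB.mul_mul_conjTranspose_same hA.sqrt)

lemma trace_ctm_eq_sum {n : ℕ} (A B : Matrix (Fin n) (Fin n) ℂ) :
    (Aᴴ * B).trace = ∑ p : Fin n × Fin n, (starRingEnd ℂ) (A p.1 p.2) * B p.1 p.2 := by
  rw [← Finset.univ_product_univ, Finset.sum_product]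
  simp only [Matrix.trace, Matrix.diag_apply, Matrix.mul_apply, conjTranspose_apply,
    RCLike.star_def]
  exact Finset.sum_comm

lemma cs_eq {n k : ℕ} (u v : Fin k → Matrix (Fin n) (Fin n) ℂ) (t : ℂ) (ht : t ≠ 0)
    (h1 : ∑ α, ((u α)ᴴ * u α).trace = t)
    (h2 : ∑ α, ((v α)ᴴ * v α).trace = t)
    (h3 : ∑ α, ((u α)ᴴ * v α).trace = t) : u = v := by
  let emb : (Fin k → Matrix (Fin n) (Fin n) ℂ) → EuclideanSpace ℂ (Fin k × Fin n × Fin n) :=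
    fun a => WithLp.toLp 2 (fun x => a x.1 x.2.1 x.2.2)
  have hgen : ∀ a b : Fin k → Matrix (Fin n) (Fin n) ℂ,
      (inner ℂ (emb a) (emb b) : ℂ) = ∑ α, ((a α)ᴴ * b α).trace := by
    intro a b
    rw [PiLp.inner_apply]
    simp only [RCLike.inner_apply, RCLike.star_def, emb]
    rw [Fintype.sum_prod_type]
    exact Finset.sum_congr rfl fun α _ => by
      rw [trace_ctm_eq_sum]; exact Finset.sum_congr rfl fun p _ => mul_comm _ _
  set U := emb u with hUdef
  set V := emb v with hVdef
  have hUV : (inner ℂ U V : ℂ) = t := by rw [hgen u v, h3]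
  have hnU : ((‖U‖ : ℂ))^2 = t := by
    have := (inner_self_eq_norm_sq_to_K (𝕜 := ℂ) U).symm
    rw [hgen u u, h1] at this; exact this
  have hnV : ((‖V‖ : ℂ))^2 = t := by
    have := (inner_self_eq_norm_sq_to_K (𝕜 := ℂ) V).symm
    rw [hgen v v, h2] at this; exact this
  have hnorm : ‖U‖ = ‖V‖ := by
    have h : (‖U‖ : ℂ)^2 = (‖V‖ : ℂ)^2 := by rw [hnU, hnV]
    have h2 : ‖U‖^2 = ‖V‖^2 := by exact_mod_cast h
    nlinarith [norm_nonneg U, norm_nonneg V]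
  have hU0 : ‖U‖ ≠ 0 := by
    intro h
    rw [h] at hnU
    simp at hnU
    exact ht hnU.symm
  have heq : (inner ℂ U V : ℂ) = (‖U‖ : ℂ) * ‖V‖ := by
    rw [hUV, ← hnU, hnorm, sq]
  have hkey := inner_eq_norm_mul_iff.mp heq
  rw [← hnorm] at hkey
  have hUV2 : U = V :=
    smul_right_injective _ (Complex.ofReal_ne_zero.mpr hU0) hkey
  funext α
  ext i j
  exact congrArg (fun W => W (α, i, j)) hUV2

lemma trace_ctm_self_eq_zero {n : ℕ} {A : Matrix (Fin n) (Fin n) ℂ}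
    (h : (Aᴴ * A).trace = 0) : A = 0 := by
  rw [trace_ctm_eq_sum] at h
  have h' : ∑ p : Fin n × Fin n, (Complex.normSq (A p.1 p.2) : ℝ) = 0 := by
    have := congrArg Complex.re h
    rw [Complex.re_sum] at this
    simpa [Complex.normSq_eq_conj_mul_self, Complex.normSq_apply] using this
  have hz := (Finset.sum_eq_zero_iff_of_nonneg
    (fun p _ => Complex.normSq_nonneg (A p.1 p.2))).mp h'
  ext i j
  have := hz (i, j) (Finset.mem_univ _)
  simpa [Complex.normSq_eq_zero] using this

theorem stmt_4 (n : ℕ) (hn : 0 < n) (k : ℕ)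
    (E : Fin k → Matrix (Fin n) (Fin n) ℂ)
    (hE : ∀ α, (E α).PosSemidef)
    (hsum : ∑ α, E α = 1)
    (Φ : Matrix (Fin n) (Fin n) ℂ → Matrix (Fin n) (Fin n) ℂ)
    (hΦ : ∀ ρ, Φ ρ = ∑ α, (hE α).sqrt * ρ * (hE α).sqrt)
    (ρ : Matrix (Fin n) (Fin n) ℂ) :
    frobNorm (Φ ρ) = frobNorm ρ ↔ Φ ρ = ρ := by
  constructor
  · intro hnorm
    set N : Fin k → Matrix (Fin n) (Fin n) ℂ := fun α => (hE α).sqrt with hNdef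
    have hNh : ∀ α, (N α)ᴴ = N α := fun α => (hE α).posSemidef_sqrt.1
    have hNN : ∀ α, N α * N α = E α := fun α => (hE α).sqrt_mul_self
    have hNpsd : ∀ α, (N α).PosSemidef := fun α => (hE α).posSemidef_sqrt
    set σ := Φ ρ with hσdef
    have hσ : σ = ∑ α, N α * ρ * N α := hΦ ρ
    by_cases hρ0 : ρ = 0
    · rw [hσdef, hΦ, hρ0]
      simp
    -- the common trace value
    set t : ℂ := (ρᴴ * ρ).trace with htdef
    have ht0 : t ≠ 0 := fun h => hρ0 (trace_ctm_self_eq_zero h)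
    -- traces are nonneg hence real
    have hρnn : 0 ≤ t := psd_trace_nonneg (posSemidef_conjTranspose_mul_self ρ)
    have hσnn : 0 ≤ (σᴴ * σ).trace := psd_trace_nonneg (posSemidef_conjTranspose_mul_self σ)
    have hρre := Complex.nonneg_iff.mp hρnn
    have hσre := Complex.nonneg_iff.mp hσnn
    have htrace_eq : (σᴴ * σ).trace = t := by
      have hre : ((σᴴ * σ).trace).re = t.re :=
        (Real.sqrt_inj hσre.1 hρre.1).mp hnorm
      exact Complex.ext hre (by rw [← hσre.2, ← hρre.2])
    -- algebraic helpers
    have hsand : ∀ (α : Fin k) (A B : Matrix (Fin n) (Fin n) ℂ),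
        A * N α * (N α * B) = A * E α * B := by
      intro α A B
      rw [mul_assoc, ← mul_assoc (N α) (N α) B, hNN, ← mul_assoc]
    have hsumE : ∀ A B : Matrix (Fin n) (Fin n) ℂ,
        ∑ α, A * E α * B = A * B := by
      intro A B
      rw [← Finset.sum_mul, ← Finset.mul_sum, hsum, mul_one]
    have hsandT : ∀ (α : Fin k) (A B : Matrix (Fin n) (Fin n) ℂ),
        (∑ α, (A * E α * B).trace) = (A * B).trace := by
      intro α A B
      rw [← Matrix.trace_sum, hsumE]
    -- first Cauchy-Schwarz application : N α * σ = ρ * N α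
    have hcs1 : (fun α => N α * σ) = fun α => ρ * N α := by
      apply cs_eq _ _ t ht0
      · calc ∑ α, ((N α * σ)ᴴ * (N α * σ)).trace
            = ∑ α, (σᴴ * E α * σ).trace := by
              refine Finset.sum_congr rfl fun α _ => ?_
              rw [conjTranspose_mul, hNh, hsand]
          _ = (σᴴ * σ).trace := by rw [← Matrix.trace_sum, hsumE]
          _ = t := htrace_eq
      · calc ∑ α, ((ρ * N α)ᴴ * (ρ * N α)).trace
            = ∑ α, (ρ * E α * ρᴴ).trace := by
              refine Finset.sum_congr rfl fun α _ => ?_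
              rw [conjTranspose_mul, hNh, trace_mul_comm, hsand]
          _ = (ρ * ρᴴ).trace := by rw [← Matrix.trace_sum, hsumE]
          _ = t := trace_mul_comm ρ ρᴴ
      · calc ∑ α, ((N α * σ)ᴴ * (ρ * N α)).trace
            = ∑ α, (σᴴ * (N α * ρ * N α)).trace := by
              refine Finset.sum_congr rfl fun α _ => ?_
              rw [conjTranspose_mul, hNh, mul_assoc, mul_assoc, ← mul_assoc (N α) ρ (N α)]
          _ = (σᴴ * σ).trace := by
              rw [← Matrix.trace_sum, ← Finset.mul_sum, ← hσ]
          _ = t := htrace_eq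
    -- second Cauchy-Schwarz application : σ * N α = N α * ρ
    have hcs2 : (fun α => σ * N α) = fun α => N α * ρ := by
      apply cs_eq _ _ t ht0
      · calc ∑ α, ((σ * N α)ᴴ * (σ * N α)).trace
            = ∑ α, (σ * E α * σᴴ).trace := by
              refine Finset.sum_congr rfl fun α _ => ?_
              rw [conjTranspose_mul, hNh, trace_mul_comm, hsand]
          _ = (σ * σᴴ).trace := by rw [← Matrix.trace_sum, hsumE]
          _ = t := by rw [trace_mul_comm, htrace_eq]
      · calc ∑ α, ((N α * ρ)ᴴ * (N α * ρ)).trace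
            = ∑ α, (ρᴴ * E α * ρ).trace := by
              refine Finset.sum_congr rfl fun α _ => ?_
              rw [conjTranspose_mul, hNh, hsand]
          _ = (ρᴴ * ρ).trace := by rw [← Matrix.trace_sum, hsumE]
          _ = t := rfl
      · calc ∑ α, ((σ * N α)ᴴ * (N α * ρ)).trace
            = ∑ α, (σᴴ * (N α * ρ * N α)).trace := by
              refine Finset.sum_congr rfl fun α _ => ?_
              rw [conjTranspose_mul, hNh, mul_assoc, trace_mul_comm]
              rw [mul_assoc, mul_assoc]
          _ = (σᴴ * σ).trace := by
              rw [← Matrix.trace_sum, ← Finset.mul_sum, ← hσ]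
          _ = t := htrace_eq
    -- anticommutation
    set δ := σ - ρ with hδdef
    have hanti : ∀ α, N α * δ = -(δ * N α) := by
      intro α
      rw [hδdef, mul_sub, sub_mul, congrFun hcs1 α, ← congrFun hcs2 α, neg_sub]
    have hz : ∀ α, (E α * (δ * δᴴ)).trace = 0 := by
      intro α
      have e1 : E α * (δ * δᴴ) = -(N α * (δ * N α * δᴴ)) := by
        rw [← hNN α, mul_assoc, ← mul_assoc (N α) δ δᴴ, hanti α, neg_mul, mul_neg]
      have nonpos : (E α * (δ * δᴴ)).trace ≤ 0 := by
        rw [e1, trace_neg, neg_nonpos, trace_mul_comm]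
        exact psd_mul_trace_nonneg ((hNpsd α).mul_mul_conjTranspose_same δ) (hNpsd α)
      have nonneg : 0 ≤ (E α * (δ * δᴴ)).trace :=
        psd_mul_trace_nonneg (hE α) (posSemidef_self_mul_conjTranspose δ)
      exact le_antisymm nonpos nonneg
    have htot : (δᴴ * δ).trace = 0 := by
      have hsplit : (δ * δᴴ).trace = ∑ α, (E α * (δ * δᴴ)).trace := by
        rw [← Matrix.trace_sum, ← Finset.sum_mul, hsum, one_mul]
      rw [trace_mul_comm, hsplit, Finset.sum_eq_zero fun α _ => hz α]
    have hδ0 : δ = 0 := trace_ctm_self_eq_zero htot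
    exact sub_eq_zero.mp hδ0
  · intro h
    rw [h]
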